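/- In the setting of the previous statement (ε mean-zero with positive-definite covariance Σ, U of full column rank d, V positive definite, D = UᵀV⁻¹U, H = UᵀV⁻¹ΣV⁻¹U, and θ̂ − θ⁰ = D⁻¹UᵀV⁻¹ε), let τ = λ_min(D H⁻¹ D) > 0 denote the smallest eigenvalue of the (symmetric positive definite) information matrix D H⁻¹ D. Then for every δ > 0, P( ‖θ̂ − θ⁰‖₂ > δ·√(d/τ) ) ≤ 1/δ². In particular, the estimation error is controlled by λ_min(D H⁻¹ D). -/

import Mathlib

open Matrix MeasureTheory

-- auxiliary: min-eigenvalue Rayleigh bound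
lemma rayleigh_min {d : ℕ} [NeZero d] (N : Matrix (Fin d) (Fin d) ℝ)
    (hN : N.IsHermitian) (x : Fin d → ℝ) :
    (⨅ i, hN.eigenvalues i) * (∑ k, x k ^ 2) ≤ x ⬝ᵥ (N *ᵥ x) := by
  set τ := ⨅ i, hN.eigenvalues i with hτ
  have hps : (N - τ • 1).PosSemidef := by
    have h1 : N - τ • 1 = (hN.eigenvectorUnitary : Matrix (Fin d) (Fin d) ℝ) *
        diagonal (fun i => hN.eigenvalues i - τ) *
        (hN.eigenvectorUnitary : Matrix (Fin d) (Fin d) ℝ)ᴴ := by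
      have hu : (hN.eigenvectorUnitary : Matrix (Fin d) (Fin d) ℝ) *
          star (hN.eigenvectorUnitary : Matrix (Fin d) (Fin d) ℝ) = 1 :=
        (Matrix.mem_unitaryGroup_iff).mp hN.eigenvectorUnitary.2
      have hdg : (diagonal (fun i => hN.eigenvalues i - τ) : Matrix (Fin d) (Fin d) ℝ)
          = diagonal (RCLike.ofReal ∘ hN.eigenvalues) - τ • 1 := by
        simp [diagonal_sub, ← Matrix.diagonal_smul, Function.comp, smul_eq_mul]
        ext i j
        by_cases h : i = j <;> simp [diagonal, h, Matrix.one_apply, smul_eq_mul]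
      rw [hdg, Matrix.mul_sub, Matrix.sub_mul]
      have hs := hN.spectral_theorem
      rw [Unitary.conjStarAlgAut_apply] at hs
      rw [← Matrix.star_eq_conjTranspose, ← hs]
      congr 1
      rw [Matrix.mul_smul, Matrix.smul_mul, Matrix.mul_one, hu]
    rw [h1]
    refine (Matrix.PosSemidef.mul_mul_conjTranspose_same ?_ _)
    refine Matrix.posSemidef_diagonal_iff.mpr fun i => ?_
    have : τ ≤ hN.eigenvalues i := ciInf_le (Finite.bddBelow_range _) i
    linarith
  have h0 := hps.dotProduct_mulVec_nonneg x
  rw [star_trivial] at h0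
  rw [Matrix.sub_mulVec, dotProduct_sub, Matrix.smul_mulVec, Matrix.one_mulVec,
    dotProduct_smul] at h0
  have : x ⬝ᵥ x = ∑ k, x k ^ 2 := by simp [dotProduct, sq]
  rw [this] at h0
  simp only [smul_eq_mul] at h0
  linarith

theorem mdsp_lemma1_consistency
    {Ω : Type*} [MeasurableSpace Ω] (μ : Measure Ω) [IsProbabilityMeasure μ]
    (M d : ℕ) [NeZero d] (ε : Ω → Fin M → ℝ)
    (Sig : Matrix (Fin M) (Fin M) ℝ) (hSig : Sig.PosDef)
    (hε1 : ∀ a : Fin M → ℝ, Integrable (fun ω => a ⬝ᵥ ε ω) μ)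
    (hε2 : ∀ a b : Fin M → ℝ, Integrable (fun ω => (a ⬝ᵥ ε ω) * (b ⬝ᵥ ε ω)) μ)
    (hmean : ∀ a : Fin M → ℝ, ∫ ω, a ⬝ᵥ ε ω ∂μ = 0)
    (hcov : ∀ a b : Fin M → ℝ, ∫ ω, (a ⬝ᵥ ε ω) * (b ⬝ᵥ ε ω) ∂μ = a ⬝ᵥ (Sig *ᵥ b))
    (U : Matrix (Fin M) (Fin d) ℝ) (hU : U.rank = d)
    (V : Matrix (Fin M) (Fin M) ℝ) (hV : V.PosDef)
    (hD : (Uᵀ * V⁻¹ * U).PosDef)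
    (hH : (Uᵀ * V⁻¹ * Sig * V⁻¹ * U).PosDef)
    (hSym : ((Uᵀ * V⁻¹ * U) * (Uᵀ * V⁻¹ * Sig * V⁻¹ * U)⁻¹ * (Uᵀ * V⁻¹ * U)).IsHermitian)
    (hτ : 0 < ⨅ i, hSym.eigenvalues i)
    (δ : ℝ) (hδ : 0 < δ) :
    μ {ω | δ * Real.sqrt ((d : ℝ) / (⨅ i, hSym.eigenvalues i)) <
        Real.sqrt (∑ k, (((Uᵀ * V⁻¹ * U)⁻¹ *ᵥ (Uᵀ *ᵥ (V⁻¹ *ᵥ ε ω))) k) ^ 2)} ≤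
      ENNReal.ofReal (1 / δ ^ 2) := by
  classical
  set τ : ℝ := ⨅ i, hSym.eigenvalues i with hτdef
  set A : Matrix (Fin d) (Fin M) ℝ := Uᵀ * V⁻¹ with hAdef
  set D : Matrix (Fin d) (Fin d) ℝ := Uᵀ * V⁻¹ * U with hDdef
  set H : Matrix (Fin d) (Fin d) ℝ := Uᵀ * V⁻¹ * Sig * V⁻¹ * U with hHdef
  set Q : Ω → ℝ := fun ω => (A *ᵥ ε ω) ⬝ᵥ (H⁻¹ *ᵥ (A *ᵥ ε ω)) with hQdef
  -- expansion of Q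
  have hQeq : ∀ ω, Q ω = ∑ j, ∑ k, H⁻¹ j k * ((A j ⬝ᵥ ε ω) * (A k ⬝ᵥ ε ω)) := by
    intro ω
    simp only [hQdef, Matrix.mulVec, dotProduct, Finset.mul_sum, Finset.sum_mul]
    refine Finset.sum_congr rfl fun j _ => ?_
    refine Finset.sum_congr rfl fun k _ => ?_
    refine Finset.sum_congr rfl fun m _ => ?_
    refine Finset.sum_congr rfl fun n _ => ?_
    ring
  -- integrability of Q
  have hQint : Integrable Q μ := by
    rw [show Q = fun ω => ∑ j, ∑ k, H⁻¹ j k * ((A j ⬝ᵥ ε ω) * (A k ⬝ᵥ ε ω)) from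
      funext hQeq]
    exact integrable_finset_sum _ fun j _ =>
      integrable_finset_sum _ fun k _ => (hε2 (A j) (A k)).const_mul _
  -- Q is nonnegative
  have hHinv : (H⁻¹).PosDef := hH.inv
  have hQnn : ∀ ω, 0 ≤ Q ω := by
    intro ω
    have := hHinv.posSemidef.dotProduct_mulVec_nonneg (A *ᵥ ε ω)
    rwa [star_trivial] at this
  -- A * Sig * Aᵀ = H
  have hVsymm : Vᵀ = V := by
    have := hV.isHermitian
    rwa [Matrix.IsHermitian, Matrix.conjTranspose_eq_transpose_of_trivial] at this
  have hASA : A * Sig * Aᵀ = H := by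
    rw [hAdef, Matrix.transpose_mul, Matrix.transpose_transpose, Matrix.transpose_nonsing_inv,
      hVsymm, hHdef]
    rw [← Matrix.mul_assoc]
  have hAS : ∀ j k, A j ⬝ᵥ (Sig *ᵥ A k) = H j k := by
    intro j k
    rw [← hASA]
    simp only [Matrix.mul_apply, Matrix.mulVec, dotProduct, Matrix.transpose_apply,
      Finset.mul_sum, Finset.sum_mul]
    rw [Finset.sum_comm]
    refine Finset.sum_congr rfl fun m _ => Finset.sum_congr rfl fun n _ => ?_
    ring
  -- integral of Q equals d
  have hHdet : IsUnit H.det := (Matrix.isUnit_iff_isUnit_det H).mp hH.isUnit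
  have hQint_eq : ∫ ω, Q ω ∂μ = (d : ℝ) := by
    rw [show (fun ω => Q ω) = fun ω => ∑ j, ∑ k, H⁻¹ j k * ((A j ⬝ᵥ ε ω) * (A k ⬝ᵥ ε ω)) from
      funext hQeq]
    rw [integral_finset_sum _ fun j _ =>
      integrable_finset_sum _ fun k _ => (hε2 (A j) (A k)).const_mul (H⁻¹ j k)]
    have : ∀ j ∈ Finset.univ, (∫ ω, ∑ k, H⁻¹ j k * ((A j ⬝ᵥ ε ω) * (A k ⬝ᵥ ε ω)) ∂μ)
        = ∑ k, H⁻¹ j k * H j k := by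
      intro j _
      rw [integral_finset_sum _ fun k _ => (hε2 (A j) (A k)).const_mul (H⁻¹ j k)]
      refine Finset.sum_congr rfl fun k _ => ?_
      rw [integral_const_mul, hcov, hAS]
    rw [Finset.sum_congr rfl this]
    have hsymH : ∀ j k, H j k = H k j := by
      intro j k
      have := hH.isHermitian.apply k j
      rwa [star_trivial] at this
    have : ∑ j, ∑ k, H⁻¹ j k * H j k = (H⁻¹ * H).trace := by
      rw [Matrix.trace]
      refine Finset.sum_congr rfl fun j _ => ?_
      rw [Matrix.diag_apply, Matrix.mul_apply]
      exact Finset.sum_congr rfl fun k _ => by rw [hsymH]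
    rw [this, Matrix.nonsing_inv_mul H hHdet, Matrix.trace_one]
    simp
  -- pointwise inclusion of events
  have hDdet : IsUnit D.det := (Matrix.isUnit_iff_isUnit_det D).mp hD.isUnit
  have hDsymm : Dᵀ = D := by
    have := hD.isHermitian
    rwa [Matrix.IsHermitian, Matrix.conjTranspose_eq_transpose_of_trivial] at this
  have hsub : {ω | δ * Real.sqrt ((d : ℝ) / τ) <
      Real.sqrt (∑ k, ((D⁻¹ *ᵥ (Uᵀ *ᵥ (V⁻¹ *ᵥ ε ω))) k) ^ 2)} ⊆
      {ω | δ ^ 2 * d ≤ Q ω} := by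
    intro ω hω
    simp only [Set.mem_setOf_eq] at hω ⊢
    set x : Fin d → ℝ := D⁻¹ *ᵥ (Uᵀ *ᵥ (V⁻¹ *ᵥ ε ω)) with hxdef
    set S : ℝ := ∑ k, x k ^ 2 with hSdef
    have hSnn : 0 ≤ S := Finset.sum_nonneg fun k _ => sq_nonneg _
    -- from the strict sqrt inequality
    have h1 : δ ^ 2 * ((d : ℝ) / τ) < S := by
      have hl : 0 ≤ δ * Real.sqrt ((d : ℝ) / τ) := by positivity
      have := mul_self_lt_mul_self hl hω
      rw [Real.mul_self_sqrt hSnn] at this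
      calc δ ^ 2 * ((d : ℝ) / τ)
          = (δ * Real.sqrt ((d : ℝ) / τ)) * (δ * Real.sqrt ((d : ℝ) / τ)) := by
            rw [mul_mul_mul_comm, Real.mul_self_sqrt (by positivity), sq]
        _ < S := this
    have h2 : δ ^ 2 * d < τ * S := by
      have := (mul_lt_mul_iff_right₀ hτ).mpr h1
      calc δ ^ 2 * d = τ * (δ ^ 2 * ((d : ℝ) / τ)) := by
            field_simp
        _ < τ * S := this
    -- identify Q ω with the quadratic form in x
    have hDx : D *ᵥ x = A *ᵥ ε ω := by
      rw [hxdef, Matrix.mulVec_mulVec, Matrix.mul_nonsing_inv D hDdet, Matrix.one_mulVec,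
        Matrix.mulVec_mulVec, hAdef]
    have hQx : x ⬝ᵥ ((D * H⁻¹ * D) *ᵥ x) = Q ω := by
      rw [hQdef]
      rw [← Matrix.mulVec_mulVec, ← Matrix.mulVec_mulVec, hDx]
      rw [Matrix.dotProduct_mulVec, ← Matrix.mulVec_transpose, hDsymm, hDx]
    have hray := rayleigh_min _ hSym x
    rw [hQx] at hray
    calc δ ^ 2 * d ≤ τ * S := le_of_lt h2
      _ ≤ Q ω := by rw [← hSdef] at hray; exact hray
  -- Markov / Chebyshev
  have hmarkov := mul_meas_ge_le_integral_of_nonneg (μ := μ)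
    (ae_of_all _ hQnn) hQint (δ ^ 2 * d)
  rw [hQint_eq] at hmarkov
  have hd : (0 : ℝ) < d := by
    have := Nat.pos_of_ne_zero (NeZero.ne d)
    exact_mod_cast this
  have hfin : μ {ω | δ ^ 2 * d ≤ Q ω} ≠ ⊤ := measure_ne_top μ _
  have hfinal : μ {ω | δ ^ 2 * d ≤ Q ω} ≤ ENNReal.ofReal (1 / δ ^ 2) := by
    rw [ENNReal.le_ofReal_iff_toReal_le hfin (by positivity)]
    calc (μ {ω | δ ^ 2 * d ≤ Q ω}).toReal ≤ (d : ℝ) / (δ ^ 2 * d) :=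
          (le_div_iff₀' (by positivity)).mpr hmarkov
      _ = 1 / δ ^ 2 := by field_simp
  exact le_trans (measure_mono hsub) hfinal
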